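/- If each component of a vector field v on ℝᵈ lies in the RKHS F_γ of the Gaussian kernel k_γ, then the directional derivative functional D_v MMD² = ⟨∇MMD², v⟩_{F_γ} holds with ∇MMD²(z) = −(2/b²)E_{z̃,z̃'}[k(z̃,z̃')(k_γ(z̃,z) − k_γ(z̃',z))(x̃−x̃')] + (4/b²)E_{z̃,z̄}[k(z̃,z̄)k_γ(z̃,z)(x̃−x̄)], i.e., the steepest-descent direction of MMD² within the unit ball of F_γᵈ is −∇MMD²/‖∇MMD²‖. -/

import Mathlib

open MeasureTheory


section AuxMMD

variable {n m : ℕ} {Fγ : Type*} [NormedAddCommGroup Fγ] [InnerProductSpace ℝ Fγ]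

private abbrev ZedSp (n m : ℕ) := EuclideanSpace ℝ (Fin n) × EuclideanSpace ℝ (Fin m)

private lemma aux_exp_bound {b : ℝ} (hb : 0 < b) {t : ℝ} :
    t * Real.exp (-(t ^ 2) / b ^ 2) ≤ b / 2 := by
  have hb2 : (0:ℝ) < b ^ 2 := by positivity
  have h1 : t ^ 2 / b ^ 2 + 1 ≤ Real.exp (t ^ 2 / b ^ 2) := Real.add_one_le_exp _
  have h2 : Real.exp (-(t ^ 2) / b ^ 2) = (Real.exp (t ^ 2 / b ^ 2))⁻¹ := by
    rw [← Real.exp_neg]; ring_nf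
  rw [h2, mul_inv_le_iff₀ (Real.exp_pos _), mul_comm (b / 2)]
  have h3 : b / 2 * (t ^ 2 / b ^ 2 + 1) ≤ b / 2 * Real.exp (t ^ 2 / b ^ 2) :=
    mul_le_mul_of_nonneg_left h1 (by positivity)
  refine le_trans ?_ (le_trans h3 (le_of_eq (mul_comm _ _)))
  rw [← sub_nonneg]
  have hne : b ^ 2 ≠ 0 := ne_of_gt hb2
  have : b / 2 * (t ^ 2 / b ^ 2 + 1) - t = (t - b) ^ 2 / (2 * b) := by
    field_simp; ring
  rw [this]
  positivity

private lemma coord_bound {n : ℕ} (x y : EuclideanSpace ℝ (Fin n)) (i : Fin n) :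
    |x i - y i| ≤ ‖x - y‖ := by
  have h : x i - y i = (x - y) i := by simp
  rw [h, EuclideanSpace.norm_eq]
  have h1 : |(x - y) i| = Real.sqrt (‖(x - y) i‖ ^ 2) := by
    rw [Real.sqrt_sq_eq_abs]; simp
  rw [h1]
  apply Real.sqrt_le_sqrt
  exact Finset.single_le_sum (f := fun j => ‖(x - y) j‖ ^ 2) (fun j _ => by positivity)
    (Finset.mem_univ i)

private lemma kmul_bound {b : ℝ} (hb : 0 < b)
    (k : ZedSp n m → ZedSp n m → ℝ)
    (hk : ∀ z z', k z z' = Real.exp (-(‖z.1 - z'.1‖ ^ 2 + ‖z.2 - z'.2‖ ^ 2) / b ^ 2))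
    (z z' : ZedSp n m) (i : Fin n) : |k z z' * (z.1 i - z'.1 i)| ≤ b / 2 := by
  rw [abs_mul, hk]
  have h0 : |Real.exp (-(‖z.1 - z'.1‖ ^ 2 + ‖z.2 - z'.2‖ ^ 2) / b ^ 2)|
      = Real.exp (-(‖z.1 - z'.1‖ ^ 2 + ‖z.2 - z'.2‖ ^ 2) / b ^ 2) := abs_of_pos (Real.exp_pos _)
  rw [h0]
  have h1 : Real.exp (-(‖z.1 - z'.1‖ ^ 2 + ‖z.2 - z'.2‖ ^ 2) / b ^ 2)
      ≤ Real.exp (-(‖z.1 - z'.1‖ ^ 2) / b ^ 2) := by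
    apply Real.exp_le_exp.mpr
    gcongr
    nlinarith [sq_nonneg ‖z.2 - z'.2‖]
  calc Real.exp (-(‖z.1 - z'.1‖ ^ 2 + ‖z.2 - z'.2‖ ^ 2) / b ^ 2) * |z.1 i - z'.1 i|
      ≤ Real.exp (-(‖z.1 - z'.1‖ ^ 2) / b ^ 2) * ‖z.1 - z'.1‖ :=
        mul_le_mul h1 (coord_bound _ _ _) (abs_nonneg _) (le_of_lt (Real.exp_pos _))
    _ ≤ b / 2 := by rw [mul_comm]; exact aux_exp_bound hb

private lemma phi_norm_one (γ : ℝ) (φγ : ZedSp n m → Fγ)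
    (hφγ : ∀ z z', (inner ℝ (φγ z) (φγ z') : ℝ) =
      Real.exp (-(‖z.1 - z'.1‖ ^ 2 + ‖z.2 - z'.2‖ ^ 2) / γ ^ 2)) (z : ZedSp n m) :
    ‖φγ z‖ = 1 := by
  have h := hφγ z z
  simp only [sub_self, norm_zero, ne_eq, OfNat.ofNat_ne_zero, not_false_eq_true, zero_pow,
    add_zero, neg_zero, zero_div, Real.exp_zero] at h
  rw [real_inner_self_eq_norm_sq] at h
  rw [← Real.sqrt_sq (norm_nonneg (φγ z)), h, Real.sqrt_one]

private lemma phi_cont (γ : ℝ) (φγ : ZedSp n m → Fγ)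
    (hφγ : ∀ z z', (inner ℝ (φγ z) (φγ z') : ℝ) =
      Real.exp (-(‖z.1 - z'.1‖ ^ 2 + ‖z.2 - z'.2‖ ^ 2) / γ ^ 2)) : Continuous φγ := by
  have hsub : ∀ z w : ZedSp n m, ‖φγ z - φγ w‖ =
      Real.sqrt (2 - 2 * Real.exp (-(‖z.1 - w.1‖ ^ 2 + ‖z.2 - w.2‖ ^ 2) / γ ^ 2)) := by
    intro z w
    rw [← Real.sqrt_sq (norm_nonneg (φγ z - φγ w))]
    congr 1
    rw [norm_sub_sq_real, hφγ z w, phi_norm_one γ φγ hφγ, phi_norm_one γ φγ hφγ]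
    ring
  rw [continuous_iff_continuousAt]
  intro z₀
  rw [ContinuousAt, tendsto_iff_dist_tendsto_zero]
  have heq : (fun w => dist (φγ w) (φγ z₀)) = fun w : ZedSp n m =>
      Real.sqrt (2 - 2 * Real.exp (-(‖w.1 - z₀.1‖ ^ 2 + ‖w.2 - z₀.2‖ ^ 2) / γ ^ 2)) := by
    funext w; rw [dist_eq_norm, hsub]
  rw [heq]
  have hc : Continuous (fun w : ZedSp n m =>
      Real.sqrt (2 - 2 * Real.exp (-(‖w.1 - z₀.1‖ ^ 2 + ‖w.2 - z₀.2‖ ^ 2) / γ ^ 2))) := by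
    fun_prop
  simpa using hc.tendsto z₀

private lemma intA {b : ℝ} (hb : 0 < b)
    (k : ZedSp n m → ZedSp n m → ℝ)
    (hk : ∀ z z', k z z' = Real.exp (-(‖z.1 - z'.1‖ ^ 2 + ‖z.2 - z'.2‖ ^ 2) / b ^ 2))
    (φγ : ZedSp n m → Fγ) (hcont : Continuous φγ) (hone : ∀ z, ‖φγ z‖ = 1)
    (μ : Measure (ZedSp n m)) [IsFiniteMeasure μ] (z : ZedSp n m) (i : Fin n) :
    Integrable (fun z' => (k z z' * (z.1 i - z'.1 i)) • (φγ z - φγ z')) μ := by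
  apply Integrable.mono' (g := fun _ : ZedSp n m => (b / 2) * 2) (integrable_const _)
  · apply Continuous.aestronglyMeasurable
    have hck : Continuous (fun z' : ZedSp n m => k z z' * (z.1 i - z'.1 i)) := by
      have h : (fun z' : ZedSp n m => k z z' * (z.1 i - z'.1 i)) = fun z' : ZedSp n m =>
          Real.exp (-(‖z.1 - z'.1‖ ^ 2 + ‖z.2 - z'.2‖ ^ 2) / b ^ 2) * (z.1 i - z'.1 i) := by
        funext z'; rw [hk]
      rw [h]; fun_prop
    exact hck.smul (continuous_const.sub hcont)
  · filter_upwards with z'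
    rw [norm_smul]
    apply mul_le_mul (kmul_bound hb k hk z z' i) ?_ (norm_nonneg _) (by positivity)
    calc ‖φγ z - φγ z'‖ ≤ ‖φγ z‖ + ‖φγ z'‖ := norm_sub_le _ _
      _ = 2 := by rw [hone, hone]; norm_num

private lemma intB {b : ℝ} (hb : 0 < b)
    (k : ZedSp n m → ZedSp n m → ℝ)
    (hk : ∀ z z', k z z' = Real.exp (-(‖z.1 - z'.1‖ ^ 2 + ‖z.2 - z'.2‖ ^ 2) / b ^ 2))
    (φγ : ZedSp n m → Fγ) (hone : ∀ z, ‖φγ z‖ = 1)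
    (μ : Measure (ZedSp n m)) [IsFiniteMeasure μ] (z : ZedSp n m) (i : Fin n) :
    Integrable (fun w => (k z w * (z.1 i - w.1 i)) • φγ z) μ := by
  apply Integrable.mono' (g := fun _ : ZedSp n m => (b / 2) * 1) (integrable_const _)
  · apply Continuous.aestronglyMeasurable
    have hck : Continuous (fun w : ZedSp n m => k z w * (z.1 i - w.1 i)) := by
      have h : (fun w : ZedSp n m => k z w * (z.1 i - w.1 i)) = fun w : ZedSp n m =>
          Real.exp (-(‖z.1 - w.1‖ ^ 2 + ‖z.2 - w.2‖ ^ 2) / b ^ 2) * (z.1 i - w.1 i) := by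
        funext w; rw [hk]
      rw [h]; fun_prop
    exact hck.smul continuous_const
  · filter_upwards with w
    rw [norm_smul, hone]
    exact mul_le_mul (kmul_bound hb k hk z w i) le_rfl zero_le_one (by positivity)

private lemma key1 (k : ZedSp n m → ZedSp n m → ℝ) (φγ : ZedSp n m → Fγ) (V : Fin n → Fγ)
    (v : ZedSp n m → EuclideanSpace ℝ (Fin n))
    (hv : ∀ z i, v z i = (inner ℝ (V i) (φγ z) : ℝ)) (z z' : ZedSp n m) :
    k z z' * (inner ℝ (z.1 - z'.1) (v z - v z') : ℝ)
      = ∑ i, (inner ℝ (V i) ((k z z' * (z.1 i - z'.1 i)) • (φγ z - φγ z')) : ℝ) := by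
  rw [PiLp.inner_apply, Finset.mul_sum]
  refine Finset.sum_congr rfl fun i _ => ?_
  simp only [RCLike.inner_apply, conj_trivial, PiLp.sub_apply, real_inner_smul_right,
    inner_sub_right, hv]
  ring

private lemma key2 (k : ZedSp n m → ZedSp n m → ℝ) (φγ : ZedSp n m → Fγ) (V : Fin n → Fγ)
    (v : ZedSp n m → EuclideanSpace ℝ (Fin n))
    (hv : ∀ z i, v z i = (inner ℝ (V i) (φγ z) : ℝ)) (z w : ZedSp n m) :
    k z w * (inner ℝ (z.1 - w.1) (v z) : ℝ)
      = ∑ i, (inner ℝ (V i) ((k z w * (z.1 i - w.1 i)) • φγ z) : ℝ) := by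
  rw [PiLp.inner_apply, Finset.mul_sum]
  refine Finset.sum_congr rfl fun i _ => ?_
  simp only [RCLike.inner_apply, conj_trivial, PiLp.sub_apply, real_inner_smul_right, hv]
  ring

end AuxMMD

/-- Kernel representation of the steepest-descent direction of the squared MMD.  Let `F_γ` be the
RKHS of the Gaussian kernel `k_γ(z,z') = exp(-‖z-z'‖²/γ²)` with feature map `φγ`, and suppose each
component of the vector field `v` lies in `F_γ`, `v_i(z) = ⟪V_i, k_γ(z,·)⟫`.  Let `G_i ∈ F_γ` be
the kernel-smoothed gradient field
`G_i = -(2/b²) E[k(z̃,z̃') (k_γ(z̃,·)-k_γ(z̃',·)) (x̃_i-x̃'_i)] + (4/b²) E[k(z̃,z̄) k_γ(z̃,·) (x̃_i-x̄_i)]`,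
so that `∇MMD²(z)_i = ⟪G_i, k_γ(z,·)⟫` is the formula of the paper.  Then the Gâteaux-derivative
functional satisfies `D_v MMD² = ⟨∇MMD², v⟩_{F_γ} = ∑ i ⟪G_i, V_i⟫`, and over the unit ball of
`F_γⁿ` the functional is bounded below by `-‖G‖` (attained by the steepest-descent direction
`v = -∇MMD²/‖∇MMD²‖`). -/
theorem stmt_19 {n m : ℕ} (b γ : ℝ) (hb : 0 < b) (hγ : 0 < γ)
    {Fγ : Type*} [NormedAddCommGroup Fγ] [InnerProductSpace ℝ Fγ] [CompleteSpace Fγ]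
    (φγ : (EuclideanSpace ℝ (Fin n) × EuclideanSpace ℝ (Fin m)) → Fγ)
    (hφγ : ∀ z z', (inner ℝ (φγ z) (φγ z') : ℝ) =
      Real.exp (-(‖z.1 - z'.1‖ ^ 2 + ‖z.2 - z'.2‖ ^ 2) / γ ^ 2))
    (k : (EuclideanSpace ℝ (Fin n) × EuclideanSpace ℝ (Fin m)) →
         (EuclideanSpace ℝ (Fin n) × EuclideanSpace ℝ (Fin m)) → ℝ)
    (hk : ∀ z z', k z z' =
      Real.exp (-(‖z.1 - z'.1‖ ^ 2 + ‖z.2 - z'.2‖ ^ 2) / b ^ 2))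
    (πx : Measure (EuclideanSpace ℝ (Fin n))) (πy : Measure (EuclideanSpace ℝ (Fin m)))
    [IsProbabilityMeasure πx] [IsProbabilityMeasure πy]
    (πxy : Measure (EuclideanSpace ℝ (Fin n) × EuclideanSpace ℝ (Fin m)))
    [IsProbabilityMeasure πxy]
    -- the components of `v` lie in `F_γ`: `v_i(z) = ⟪V_i, φγ z⟫`
    (V : Fin n → Fγ)
    (v : (EuclideanSpace ℝ (Fin n) × EuclideanSpace ℝ (Fin m)) → EuclideanSpace ℝ (Fin n))
    (hv : ∀ z i, v z i = (inner ℝ (V i) (φγ z) : ℝ))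
    -- the kernel-smoothed gradient field `G_i ∈ F_γ` (Bochner integrals)
    (G : Fin n → Fγ)
    (hG : ∀ i, G i =
      (-(2 / b ^ 2)) • (∫ z, ∫ z', (k z z' * (z.1 i - z'.1 i)) • (φγ z - φγ z')
          ∂(πx.prod πy) ∂(πx.prod πy))
      + (4 / b ^ 2) • ∫ z, ∫ w, (k z w * (z.1 i - w.1 i)) • φγ z ∂πxy ∂(πx.prod πy))
    -- integrability of the vector-valued integrands
    (hint1 : ∀ i, Integrable (fun z =>
      ∫ z', (k z z' * (z.1 i - z'.1 i)) • (φγ z - φγ z') ∂(πx.prod πy)) (πx.prod πy))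
    (hint2 : ∀ i, Integrable (fun z =>
      ∫ w, (k z w * (z.1 i - w.1 i)) • φγ z ∂πxy) (πx.prod πy)) :
    (-(2 / b ^ 2) * (∫ z, ∫ z', k z z' * inner ℝ (z.1 - z'.1) (v z - v z')
          ∂(πx.prod πy) ∂(πx.prod πy))
      + (4 / b ^ 2) * ∫ z, ∫ w, k z w * inner ℝ (z.1 - w.1) (v z) ∂πxy ∂(πx.prod πy))
      = ∑ i, (inner ℝ (G i) (V i) : ℝ) ∧
    ∀ W : Fin n → Fγ, (∑ i, ‖W i‖ ^ 2) ≤ 1 →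
      -Real.sqrt (∑ i, ‖G i‖ ^ 2) ≤ ∑ i, (inner ℝ (G i) (W i) : ℝ) := by
  have hcont : Continuous φγ := phi_cont γ φγ hφγ
  have hone : ∀ z, ‖φγ z‖ = 1 := phi_norm_one γ φγ hφγ
  have hIA : ∀ z i, Integrable
      (fun z' => (k z z' * (z.1 i - z'.1 i)) • (φγ z - φγ z')) (πx.prod πy) :=
    fun z i => intA hb k hk φγ hcont hone _ z i
  have hIB : ∀ z i, Integrable
      (fun w => (k z w * (z.1 i - w.1 i)) • φγ z) πxy :=
    fun z i => intB hb k hk φγ hone _ z i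
  constructor
  · -- first conjunct
    have inner1 : ∀ z, (∫ z', k z z' * inner ℝ (z.1 - z'.1) (v z - v z') ∂(πx.prod πy))
        = ∑ i, (inner ℝ (V i)
            (∫ z', (k z z' * (z.1 i - z'.1 i)) • (φγ z - φγ z') ∂(πx.prod πy)) : ℝ) := by
      intro z
      simp_rw [key1 k φγ V v hv z]
      rw [integral_finset_sum _ (fun i _ => (hIA z i).const_inner (V i))]
      exact Finset.sum_congr rfl fun i _ => integral_inner (hIA z i) (V i)
    have inner2 : ∀ z, (∫ w, k z w * inner ℝ (z.1 - w.1) (v z) ∂πxy)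
        = ∑ i, (inner ℝ (V i)
            (∫ w, (k z w * (z.1 i - w.1 i)) • φγ z ∂πxy) : ℝ) := by
      intro z
      simp_rw [key2 k φγ V v hv z]
      rw [integral_finset_sum _ (fun i _ => (hIB z i).const_inner (V i))]
      exact Finset.sum_congr rfl fun i _ => integral_inner (hIB z i) (V i)
    have outer1 : (∫ z, ∫ z', k z z' * inner ℝ (z.1 - z'.1) (v z - v z')
          ∂(πx.prod πy) ∂(πx.prod πy))
        = ∑ i, (inner ℝ (V i) (∫ z, ∫ z', (k z z' * (z.1 i - z'.1 i)) • (φγ z - φγ z')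
            ∂(πx.prod πy) ∂(πx.prod πy)) : ℝ) := by
      simp_rw [inner1]
      rw [integral_finset_sum _ (fun i _ => (hint1 i).const_inner (V i))]
      exact Finset.sum_congr rfl fun i _ => integral_inner (hint1 i) (V i)
    have outer2 : (∫ z, ∫ w, k z w * inner ℝ (z.1 - w.1) (v z) ∂πxy ∂(πx.prod πy))
        = ∑ i, (inner ℝ (V i) (∫ z, ∫ w, (k z w * (z.1 i - w.1 i)) • φγ z ∂πxy
            ∂(πx.prod πy)) : ℝ) := by
      simp_rw [inner2]
      rw [integral_finset_sum _ (fun i _ => (hint2 i).const_inner (V i))]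
      exact Finset.sum_congr rfl fun i _ => integral_inner (hint2 i) (V i)
    rw [outer1, outer2, Finset.mul_sum, Finset.mul_sum, ← Finset.sum_add_distrib]
    refine Finset.sum_congr rfl fun i _ => ?_
    rw [hG i, inner_add_left, real_inner_smul_left, real_inner_smul_left,
      real_inner_comm (V i), real_inner_comm (V i)]
  · -- second conjunct
    intro W hW
    have h1 : ∀ i ∈ Finset.univ, -(‖G i‖ * ‖W i‖) ≤ (inner ℝ (G i) (W i) : ℝ) :=
      fun i _ => (abs_le.mp (abs_real_inner_le_norm (G i) (W i))).1
    calc -Real.sqrt (∑ i, ‖G i‖ ^ 2)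
        ≤ -(Real.sqrt (∑ i, ‖G i‖ ^ 2) * Real.sqrt (∑ i, ‖W i‖ ^ 2)) := by
          rw [neg_le_neg_iff]
          exact mul_le_of_le_one_right (Real.sqrt_nonneg _) (Real.sqrt_le_one.mpr hW)
      _ ≤ -(∑ i, ‖G i‖ * ‖W i‖) := by
          rw [neg_le_neg_iff]
          exact Real.sum_mul_le_sqrt_mul_sqrt _ _ _
      _ = ∑ i, -(‖G i‖ * ‖W i‖) := by rw [← Finset.sum_neg_distrib]
      _ ≤ ∑ i, (inner ℝ (G i) (W i) : ℝ) := Finset.sum_le_sum h1
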